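/- arXiv:2208.09792 — 3 statements merged into one kernel-verified Lean document; each statement's English description precedes it below -/
import Mathlib

section
/- Let β > 0 be a real number and U ≥ 1 a natural number. The function f(δ) = (β − δ)^(U+1) / (β − (U+1)·δ) is strictly monotonically increasing on the interval [0, β/(U+1)). -/
/-- Paper Lemma 1 (monotonicity step): the exponentiated sum-rate difference
`f(δ) = (β − δ)^(U+1) / (β − (U+1)δ)` is strictly increasing on `[0, β/(U+1))`. -/
theorem stmt_1 (β : ℝ) (U : ℕ) (hU : 1 ≤ U) (hβ : 0 < β) :
    StrictMonoOn (fun δ : ℝ => (β - δ) ^ (U + 1) / (β - ((U : ℝ) + 1) * δ))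
      (Set.Ico 0 (β / ((U : ℝ) + 1))) := by
  have hU1 : (0:ℝ) < (U:ℝ) + 1 := by positivity
  have hden : ∀ x ∈ Set.Ico (0:ℝ) (β / ((U : ℝ) + 1)), 0 < β - ((U:ℝ)+1)*x := by
    intro x hx
    have := hx.2
    rw [lt_div_iff₀ hU1] at this
    nlinarith
  apply strictMonoOn_of_deriv_pos (convex_Ico _ _)
  · apply ContinuousOn.div
    · fun_prop
    · fun_prop
    · intro x hx
      exact (hden x hx).ne'
  · intro x hx
    rw [interior_Ico] at hx
    obtain ⟨hx0, hx1⟩ := hx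
    have hd : 0 < β - ((U:ℝ)+1)*x := hden x ⟨le_of_lt hx0, hx1⟩
    have hβx : 0 < β - x := by nlinarith
    have h1 : HasDerivAt (fun δ : ℝ => (β - δ) ^ (U + 1))
        ((↑(U+1) * (β - x) ^ U) * (-1)) x := by
      have := (((hasDerivAt_id x).const_sub β).fun_pow (U+1))
      simpa using this
    have h2 : HasDerivAt (fun δ : ℝ => β - ((U : ℝ) + 1) * δ)
        (-(((U:ℝ)+1))) x := by
      have := ((hasDerivAt_id x).const_mul ((U:ℝ)+1)).const_sub β
      simpa using this
    have hdf := h1.fun_div h2 hd.ne'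
    rw [hdf.deriv]
    have hnum : (↑(U+1) * (β - x) ^ U * (-1)) * (β - ((U:ℝ)+1)*x)
        - (β - x) ^ (U + 1) * (-(((U:ℝ)+1)))
        = ((U:ℝ)+1) * (β - x) ^ U * ((U:ℝ) * x) := by
      push_cast
      rw [pow_succ]
      ring
    rw [hnum]
    have hUpos : (0:ℝ) < (U:ℝ) := by exact_mod_cast hU
    positivity
end

section
/- Let U ≥ 1 be a natural number and r, r̃ : Fin U → ℝ with r(u) > 0 and r̃(u) > 0 for all u, and suppose ∏ᵤ r(u) < ∏ᵤ r̃(u). Define S(P) = log₂( ((P + ∑ᵤ 1/r(u))/U)^U · ∏ᵤ r(u) ) and S̃(P) = log₂( ((P + ∑ᵤ 1/r̃(u))/U)^U · ∏ᵤ r̃(u) ). Then there exists P₀ such that S(P) < S̃(P) for all P ≥ P₀. -/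
/-- Paper Lemma 3 (high-SNR form): if `∏ᵤ rᵤ < ∏ᵤ r̃ᵤ`, then for all
sufficiently large power budgets `P` the water-filled DPC sum rate with gains
`r̃` strictly exceeds the one with gains `r`. -/
theorem stmt_8 (U : ℕ) (hU : 1 ≤ U) (r rt : Fin U → ℝ)
    (hr : ∀ u, 0 < r u) (hrt : ∀ u, 0 < rt u)
    (hprod : ∏ u, r u < ∏ u, rt u) :
    ∃ P₀ : ℝ, ∀ P ≥ P₀,
      Real.logb 2 (((P + ∑ u, 1 / r u) / (U : ℝ)) ^ U * ∏ u, r u) <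
      Real.logb 2 (((P + ∑ u, 1 / rt u) / (U : ℝ)) ^ U * ∏ u, rt u) := by
  have hUne : U ≠ 0 := by omega
  have hU0 : (0:ℝ) < (U:ℝ) := by exact_mod_cast Nat.pos_of_ne_zero hUne
  set a := ∑ u, 1 / r u with ha
  set b := ∑ u, 1 / rt u with hb
  set Pr := ∏ u, r u with hPr
  set Prt := ∏ u, rt u with hPrt
  have hPr0 : 0 < Pr := Finset.prod_pos (fun u _ => hr u)
  have hPrt0 : 0 < Prt := Finset.prod_pos (fun u _ => hrt u)
  have ha0 : 0 ≤ a := Finset.sum_nonneg fun u _ => (one_div_pos.mpr (hr u)).le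
  have hb0 : 0 ≤ b := Finset.sum_nonneg fun u _ => (one_div_pos.mpr (hrt u)).le
  set c := Prt / Pr with hc
  have hc1 : 1 < c := (one_lt_div hPr0).mpr hprod
  have hc0 : (0:ℝ) < c := lt_trans one_pos hc1
  set ρ := c ^ ((U:ℝ)⁻¹) with hρ
  have hρ1 : 1 < ρ := by
    rw [hρ]
    exact Real.one_lt_rpow_iff_of_pos hc0 |>.mpr (Or.inl ⟨hc1, by positivity⟩)
  have hρU : ρ ^ U = c := by
    rw [hρ, ← Real.rpow_natCast (c ^ ((U:ℝ)⁻¹)) U, ← Real.rpow_mul hc0.le,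
      inv_mul_cancel₀ (by exact_mod_cast hUne), Real.rpow_one]
  refine ⟨max 0 ((a - ρ * b) / (ρ - 1) + 1), fun P hP => ?_⟩
  have hP0 : 0 ≤ P := le_trans (le_max_left _ _) hP
  have hPa : 0 < P + a := by
    have : 0 < a := Finset.sum_pos (fun u _ => one_div_pos.mpr (hr u)) ⟨⟨0, Nat.pos_of_ne_zero hUne⟩, Finset.mem_univ _⟩
    linarith
  have hPb : 0 < P + b := by
    have : 0 < b := Finset.sum_pos (fun u _ => one_div_pos.mpr (hrt u)) ⟨⟨0, Nat.pos_of_ne_zero hUne⟩, Finset.mem_univ _⟩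
    linarith
  have hkey : P + a < ρ * (P + b) := by
    have h1 : (a - ρ * b) / (ρ - 1) < P := by
      have := le_trans (le_max_right 0 ((a - ρ * b) / (ρ - 1) + 1)) hP
      linarith
    have h2 : a - ρ * b < P * (ρ - 1) :=
      (div_lt_iff₀ (by linarith : (0:ℝ) < ρ - 1)).mp h1
    nlinarith
  have hpow : (P + a) ^ U < c * (P + b) ^ U := by
    calc (P + a) ^ U < (ρ * (P + b)) ^ U := pow_lt_pow_left₀ hkey hPa.le hUne
      _ = ρ ^ U * (P + b) ^ U := mul_pow _ _ _
      _ = c * (P + b) ^ U := by rw [hρU]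
  have hmain : ((P + a) / U) ^ U * Pr < ((P + b) / U) ^ U * Prt := by
    rw [div_pow, div_pow]
    rw [div_mul_eq_mul_div, div_mul_eq_mul_div, div_lt_div_iff_of_pos_right (by positivity)]
    have : c * Pr = Prt := by rw [hc]; field_simp
    calc (P + a) ^ U * Pr < c * (P + b) ^ U * Pr :=
          mul_lt_mul_of_pos_right hpow hPr0
      _ = (P + b) ^ U * (c * Pr) := by ring
      _ = (P + b) ^ U * Prt := by rw [this]
  exact Real.logb_lt_logb one_lt_two (by positivity) hmain
end

section
/- Let U ≥ 1 be a natural number, g : Fin U → ℝ with g(u) > 0 for all u, and β > 0 a real number. Define the water-filling allocation λ(u) = max(β − 1/g(u), 0). Then for every μ : Fin U → ℝ with μ(u) ≥ 0 for all u and ∑ᵤ μ(u) = ∑ᵤ λ(u), one has ∑ᵤ log(1 + g(u)·μ(u)) ≤ ∑ᵤ log(1 + g(u)·λ(u)). -/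
/-- Optimality of water-filling: the allocation `λᵤ = max(β − 1/gᵤ, 0)`
maximizes `∑ᵤ log(1 + gᵤ μᵤ)` among all nonnegative allocations `μ` with the
same total power. -/
theorem stmt_13 (U : ℕ) (hU : 1 ≤ U) (g : Fin U → ℝ) (hg : ∀ u, 0 < g u)
    (β : ℝ) (hβ : 0 < β) :
    ∀ μ : Fin U → ℝ, (∀ u, 0 ≤ μ u) →
      (∑ u, μ u = ∑ u, max (β - 1 / g u) 0) →
      ∑ u, Real.log (1 + g u * μ u) ≤
        ∑ u, Real.log (1 + g u * max (β - 1 / g u) 0) := by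
  intro μ hμ hsum
  set lam : Fin U → ℝ := fun u => max (β - 1 / g u) 0 with hlam
  have hlam0 : ∀ u, 0 ≤ lam u := fun u => le_max_right _ _
  have hbpos : ∀ u, 0 < 1 + g u * lam u := fun u =>
    lt_add_of_pos_of_le one_pos (mul_nonneg (hg u).le (hlam0 u))
  have hapos : ∀ u, 0 < 1 + g u * μ u := fun u =>
    lt_add_of_pos_of_le one_pos (mul_nonneg (hg u).le (hμ u))
  -- tangent line bound
  have key : ∀ u, Real.log (1 + g u * μ u) ≤
      Real.log (1 + g u * lam u) + (μ u - lam u) / β := by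
    intro u
    have h1 : Real.log (1 + g u * μ u) - Real.log (1 + g u * lam u) ≤
        (g u * μ u - g u * lam u) / (1 + g u * lam u) := by
      rw [← Real.log_div (hapos u).ne' (hbpos u).ne']
      have := Real.log_le_sub_one_of_pos (div_pos (hapos u) (hbpos u))
      calc Real.log ((1 + g u * μ u) / (1 + g u * lam u))
          ≤ (1 + g u * μ u) / (1 + g u * lam u) - 1 := this
        _ = (g u * μ u - g u * lam u) / (1 + g u * lam u) := by
            rw [div_sub_one (hbpos u).ne']; ring_nf
    have h2 : (g u * μ u - g u * lam u) / (1 + g u * lam u) ≤ (μ u - lam u) / β := by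
      rcases le_or_gt (β - 1 / g u) 0 with hc | hc
      · -- lam u = 0, g u ≤ 1/β
        have hl : lam u = 0 := max_eq_right hc
        have hgb : g u * β ≤ 1 := by
          have : β ≤ 1 / g u := by linarith
          calc g u * β ≤ g u * (1 / g u) := by
                exact mul_le_mul_of_nonneg_left this (hg u).le
            _ = 1 := by field_simp [(hg u).ne']
        rw [hl]
        simp only [mul_zero, sub_zero, add_zero, div_one]
        rw [div_eq_mul_inv, ← mul_comm]
        have : g u ≤ β⁻¹ := by
          rw [le_inv_comm₀ (hg u) hβ]
          calc β = (g u)⁻¹ * (g u * β) := by field_simp [(hg u).ne']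
            _ ≤ (g u)⁻¹ * 1 := by
                exact mul_le_mul_of_nonneg_left hgb (inv_nonneg.mpr (hg u).le)
            _ = (g u)⁻¹ := mul_one _
        exact mul_le_mul_of_nonneg_left this (hμ u)
      · -- lam u = β - 1/g u, 1 + g u * lam u = g u * β
        have hl : lam u = β - 1 / g u := max_eq_left hc.le
        have hden : 1 + g u * lam u = g u * β := by
          rw [hl]; field_simp [(hg u).ne']; ring
        rw [hden]
        rw [show g u * μ u - g u * lam u = g u * (μ u - lam u) by ring,
          mul_comm (g u) β, mul_comm (g u) (μ u - lam u),
          mul_div_mul_right _ _ (hg u).ne']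
    linarith
  calc ∑ u, Real.log (1 + g u * μ u)
      ≤ ∑ u, (Real.log (1 + g u * lam u) + (μ u - lam u) / β) :=
        Finset.sum_le_sum fun u _ => key u
    _ = ∑ u, Real.log (1 + g u * lam u) + (∑ u, μ u - ∑ u, lam u) / β := by
        rw [Finset.sum_add_distrib, ← Finset.sum_div, Finset.sum_sub_distrib]
    _ = ∑ u, Real.log (1 + g u * lam u) := by
        rw [hsum]; simp
end
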